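/- Let ⟨x,y⟩₁ = −x₀y₀ + x₁y₁ + x₂y₂ + x₃y₃ + x₄y₄ denote the Lorentzian bilinear form on ℝ⁵. Let a, b be nonzero real numbers and c a real number with c² − 1/a² − 1/b² = 1, and define Θ(t,u) = (c, cos(a t)/a, sin(a t)/a, cos(b u)/b, sin(b u)/b). Then for all (t,u): ⟨Θ, Θ⟩₁ = −1 (so Θ takes values in the hyperbolic space H⁴ = {x ∈ ℝ⁵ : ⟨x,x⟩₁ = −1}), and ⟨∂ₜΘ, ∂ₜΘ⟩₁ = 1, ⟨∂ᵤΘ, ∂ᵤΘ⟩₁ = 1, ⟨∂ₜΘ, ∂ᵤΘ⟩₁ = 0. -/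

import Mathlib

/-- The Lorentzian bilinear form on `ℝ⁵` with timelike coordinate `x₀`. -/
def lor5 (x y : Fin 5 → ℝ) : ℝ :=
  -(x 0 * y 0) + x 1 * y 1 + x 2 * y 2 + x 3 * y 3 + x 4 * y 4

/-- Case (1) of Proposition 4.3: the product-of-circles surface is a unit-speed
orthogonal parametrization lying in `H⁴ ⊂ ℝ⁵₁`. -/
theorem stmt_7 (a b c : ℝ) (ha : a ≠ 0) (hb : b ≠ 0)
    (hc : c ^ 2 - 1 / a ^ 2 - 1 / b ^ 2 = 1)
    (Θ : ℝ → ℝ → Fin 5 → ℝ)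
    (hΘ : ∀ t u : ℝ, Θ t u =
      ![c, Real.cos (a * t) / a, Real.sin (a * t) / a,
        Real.cos (b * u) / b, Real.sin (b * u) / b]) :
    ∀ t u : ℝ,
      lor5 (Θ t u) (Θ t u) = -1 ∧
      lor5 (deriv (fun t' => Θ t' u) t) (deriv (fun t' => Θ t' u) t) = 1 ∧
      lor5 (deriv (fun u' => Θ t u') u) (deriv (fun u' => Θ t u') u) = 1 ∧
      lor5 (deriv (fun t' => Θ t' u) t) (deriv (fun u' => Θ t u') u) = 0 := by
  intro t u
  have hdt : HasDerivAt (fun t' => Θ t' u)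
      ![0, -Real.sin (a * t), Real.cos (a * t), 0, 0] t := by
    have heq : (fun t' => Θ t' u) = fun t' =>
        ![c, Real.cos (a * t') / a, Real.sin (a * t') / a,
          Real.cos (b * u) / b, Real.sin (b * u) / b] := by
      funext t'; exact hΘ t' u
    rw [heq, hasDerivAt_pi]
    intro i
    fin_cases i
    · simpa using hasDerivAt_const t c
    · simpa [neg_div, mul_div_assoc, div_self ha] using
        (((hasDerivAt_id t).const_mul a).cos).div_const a
    · simpa [neg_div, mul_div_assoc, div_self ha] using
        (((hasDerivAt_id t).const_mul a).sin).div_const a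
    · simpa using hasDerivAt_const t (Real.cos (b * u) / b)
    · simpa using hasDerivAt_const t (Real.sin (b * u) / b)
  have hdu : HasDerivAt (fun u' => Θ t u')
      ![0, 0, 0, -Real.sin (b * u), Real.cos (b * u)] u := by
    have heq : (fun u' => Θ t u') = fun u' =>
        ![c, Real.cos (a * t) / a, Real.sin (a * t) / a,
          Real.cos (b * u') / b, Real.sin (b * u') / b] := by
      funext u'; exact hΘ t u'
    rw [heq, hasDerivAt_pi]
    intro i
    fin_cases i
    · simpa using hasDerivAt_const u c
    · simpa using hasDerivAt_const u (Real.cos (a * t) / a)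
    · simpa using hasDerivAt_const u (Real.sin (a * t) / a)
    · simpa [neg_div, mul_div_assoc, div_self hb] using
        (((hasDerivAt_id u).const_mul b).cos).div_const b
    · simpa [neg_div, mul_div_assoc, div_self hb] using
        (((hasDerivAt_id u).const_mul b).sin).div_const b
  have hc' : c ^ 2 * (a ^ 2 * b ^ 2) = a ^ 2 * b ^ 2 + b ^ 2 + a ^ 2 := by
    field_simp at hc; nlinarith [hc]
  have hs1 := Real.sin_sq_add_cos_sq (a * t)
  have hs2 := Real.sin_sq_add_cos_sq (b * u)
  rw [hdt.deriv, hdu.deriv, hΘ t u]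
  refine ⟨?_, ?_, ?_, ?_⟩ <;>
    simp only [lor5, Matrix.cons_val_zero, Matrix.cons_val_one, Matrix.head_cons,
      Matrix.cons_val_two, Matrix.tail_cons, Matrix.cons_val_three, Matrix.cons_val_four]
  · field_simp
    linear_combination b^2 * hs1 + a^2 * hs2 - hc'
  · nlinarith [hs1]
  · nlinarith [hs2]
  · ring
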